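/- Let a_1, a_2, a_3 ≥ 2 be pairwise coprime integers and b_1, b_2, b_3 positive integers with 0 < b_i < a_i, satisfying b_1/a_1 + b_2/a_2 + b_3/a_3 = 1 + ε/(a_1 a_2 a_3) with ε ∈ {−1, 1}, ordered so that b_1/a_1 > b_2/a_2 > b_3/a_3, and with b_1/a_1 ≥ 1/2. Then b_3/a_3 < 1/4. -/

import Mathlib

theorem stmt_2 (a₁ a₂ a₃ b₁ b₂ b₃ ε : ℤ)
    (ha₁ : 2 ≤ a₁) (ha₂ : 2 ≤ a₂) (ha₃ : 2 ≤ a₃)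
    (hcop12 : IsCoprime a₁ a₂) (hcop13 : IsCoprime a₁ a₃) (hcop23 : IsCoprime a₂ a₃)
    (hb₁ : 0 < b₁) (hb₁' : b₁ < a₁) (hb₂ : 0 < b₂) (hb₂' : b₂ < a₂)
    (hb₃ : 0 < b₃) (hb₃' : b₃ < a₃)
    (hε : ε = 1 ∨ ε = -1)
    (heq : (b₁ : ℚ) / a₁ + (b₂ : ℚ) / a₂ + (b₃ : ℚ) / a₃
      = 1 + (ε : ℚ) / ((a₁ : ℚ) * a₂ * a₃))
    (hord₁ : (b₂ : ℚ) / a₂ < (b₁ : ℚ) / a₁) (hord₂ : (b₃ : ℚ) / a₃ < (b₂ : ℚ) / a₂)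
    (hhalf : (1 : ℚ) / 2 ≤ (b₁ : ℚ) / a₁) :
    (b₃ : ℚ) / a₃ < 1 / 4 := by
  have ha₁q : (0:ℚ) < (a₁:ℚ) := by exact_mod_cast lt_of_lt_of_le (by norm_num) ha₁
  have ha₂q : (0:ℚ) < (a₂:ℚ) := by exact_mod_cast lt_of_lt_of_le (by norm_num) ha₂
  have ha₃q : (0:ℚ) < (a₃:ℚ) := by exact_mod_cast lt_of_lt_of_le (by norm_num) ha₃
  by_contra h
  push_neg at h
  -- integer versions
  have h3 : a₃ ≤ 4 * b₃ := by
    have h' := (div_le_div_iff₀ (by norm_num) ha₃q).mp h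
    exact_mod_cast (by linarith : (a₃:ℚ) ≤ 4 * b₃)
  have h1 : a₁ ≤ 2 * b₁ := by
    have h' := (div_le_div_iff₀ (by norm_num) ha₁q).mp hhalf
    exact_mod_cast (by linarith : (a₁:ℚ) ≤ 2 * b₁)
  have h2 : b₃ * a₂ + 1 ≤ b₂ * a₃ := by
    have := (div_lt_div_iff₀ ha₃q ha₂q).mp hord₂
    have : (b₃:ℤ) * a₂ < b₂ * a₃ := by exact_mod_cast this
    omega
  have heqZ : b₁ * a₂ * a₃ + b₂ * a₁ * a₃ + b₃ * a₁ * a₂ = a₁ * a₂ * a₃ + ε := by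
    field_simp at heq
    have : (b₁ * a₂ + b₂ * a₁) * a₃ + b₃ * (a₁ * a₂) = a₁ * a₂ * a₃ + ε := by
      have h' : (b₁ * a₂ + a₁ * b₂) * a₃ + a₁ * a₂ * b₃ = a₁ * a₂ * a₃ + ε := by exact_mod_cast heq
      linear_combination h'
    linarith [this, (by ring : (b₁ * a₂ + b₂ * a₁) * a₃ + b₃ * (a₁ * a₂) = b₁ * a₂ * a₃ + b₂ * a₁ * a₃ + b₃ * a₁ * a₂)]
  have hεle : ε ≤ 1 := by rcases hε with rfl | rfl <;> norm_num
  nlinarith [mul_le_mul_of_nonneg_right h1 (mul_nonneg (by linarith : (0:ℤ) ≤ a₂) (by linarith : (0:ℤ) ≤ a₃)),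
    mul_le_mul_of_nonneg_left h2 (by linarith : (0:ℤ) ≤ a₁),
    mul_le_mul_of_nonneg_left h3 (mul_nonneg (by linarith : (0:ℤ) ≤ a₁) (by linarith : (0:ℤ) ≤ b₂))]
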